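/- Define a sequence C̃ : ℕ≥1 → ℝ by C̃(1) = 2 and C̃(k) = 1 + (C̃(⌊k/2⌋) + C̃(⌈k/2⌉))/2 for k ≥ 2. Then for every n ≥ 2, C̃(n) = ⌊log₂(n−1)⌋ + 1 + n/2^{⌊log₂(n−1)⌋}. -/

import Mathlib

/-- Let `C̃ : ℕ → ℝ` satisfy `C̃ 1 = 2` and
`C̃ k = 1 + (C̃ ⌊k/2⌋ + C̃ ⌈k/2⌉)/2` for `k ≥ 2`.  Then for every `n ≥ 2`,
`C̃ n = ⌊log₂ (n-1)⌋ + 1 + n / 2 ^ ⌊log₂ (n-1)⌋`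
(where `⌊log₂ m⌋` is the largest `e` with `2 ^ e ≤ m`, i.e. `Nat.log 2 m`). -/
theorem dichotomic_mean_cost_closed_form
    (C : ℕ → ℝ) (hC1 : C 1 = 2)
    (hCk : ∀ k : ℕ, 2 ≤ k → C k = 1 + (C (k / 2) + C ((k + 1) / 2)) / 2) :
    ∀ n : ℕ, 2 ≤ n →
      C n = (Nat.log 2 (n - 1) : ℝ) + 1 + (n : ℝ) / 2 ^ (Nat.log 2 (n - 1)) := by
  have hC2 : C 2 = 3 := by
    rw [hCk 2 (by norm_num)]
    norm_num [hC1]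
  intro n
  induction n using Nat.strong_induction_on with
  | _ n ih =>
    intro hn
    rcases eq_or_lt_of_le hn with h2 | h3
    · rw [← h2, hC2]; norm_num
    rcases eq_or_lt_of_le (show 3 ≤ n by omega) with h3' | h4
    · rw [← h3', hCk 3 (by norm_num)]
      have : Nat.log 2 2 = 1 := Nat.log_eq_of_pow_le_of_lt_pow (by norm_num) (by norm_num)
      norm_num [hC1, hC2, this]
    -- n ≥ 4
    have hn4 : 4 ≤ n := by omega
    set L := Nat.log 2 (n - 1) with hLdef
    have hpowL : 2 ^ L ≤ n - 1 := Nat.pow_log_le_self 2 (by omega)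
    have hltL : n - 1 < 2 ^ (L + 1) := Nat.lt_pow_succ_log_self (by norm_num) _
    have hL1 : 1 ≤ L := by
      have := (Nat.le_log_iff_pow_le (by norm_num) (show n - 1 ≠ 0 by omega)).mpr
        (show 2 ^ 1 ≤ n - 1 by omega)
      omega
    obtain ⟨M, hM⟩ : ∃ M, L = M + 1 := ⟨L - 1, by omega⟩
    have hb1 : (n + 1) / 2 - 1 = (n - 1) / 2 := by omega
    have hlogb : Nat.log 2 ((n + 1) / 2 - 1) = M := by
      rw [hb1, Nat.log_div_base, ← hLdef]; omega
    rw [hCk n (by omega), ih (n / 2) (by omega) (by omega),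
      ih ((n + 1) / 2) (by omega) (by omega), hlogb]
    have hpML : 2 ^ L = 2 * 2 ^ M := by rw [hM]; ring
    rcases Nat.even_or_odd n with he | ho
    · -- n even
      have h0 : n % 2 = 0 := Nat.even_iff.mp he
      have hab : n / 2 = (n + 1) / 2 := by omega
      have hcast : (((n + 1) / 2 : ℕ) : ℝ) = (n : ℝ) / 2 := by
        have hnat : 2 * ((n + 1) / 2) = n := by omega
        have h2 := congrArg (fun x : ℕ => (x : ℝ)) hnat
        push_cast at h2
        linarith
      rw [hab, hlogb, hM, hcast]
      have hp : (2 : ℝ) ^ (M + 1) = 2 ^ M * 2 := by ring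
      rw [hp]
      have h1 : (2 : ℝ) ^ M ≠ 0 := by positivity
      field_simp
      push_cast
      ring
    · -- n odd
      have hoo : n % 2 = 1 := Nat.odd_iff.mp ho
      have hcastb : (((n + 1) / 2 : ℕ) : ℝ) = ((n : ℝ) + 1) / 2 := by
        have hnat : 2 * ((n + 1) / 2) = n + 1 := by omega
        have h2 := congrArg (fun x : ℕ => (x : ℝ)) hnat
        push_cast at h2
        linarith
      have hcasta : ((n / 2 : ℕ) : ℝ) = ((n : ℝ) - 1) / 2 := by
        have hnat : 2 * (n / 2) + 1 = n := by omega
        have h2 := congrArg (fun x : ℕ => (x : ℝ)) hnat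
        push_cast at h2
        linarith
      by_cases hpow : n - 1 = 2 ^ L
      · -- n = 2^L + 1
        have hL2 : 2 ≤ L := by
          by_contra h
          have : L = 1 := by omega
          rw [this] at hpow
          omega
        obtain ⟨K, hK⟩ : ∃ K, M = K + 1 := ⟨M - 1, by omega⟩
        have hKK : 2 ^ (M + 1) = 2 ^ (K + 2) := by rw [hK]
        have hpow' : n = 2 ^ (K + 2) + 1 := by
          rw [hM] at hpow; rw [hKK] at hpow; omega
        have hp2 : 2 ^ (K + 2) = 2 * 2 ^ (K + 1) := by ring
        have hp1 : 2 ^ (K + 1) = 2 * 2 ^ K := by ring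
        have hk1 : 1 ≤ 2 ^ K := Nat.one_le_two_pow
        have haval : n / 2 = 2 ^ (K + 1) := by omega
        have hloga : Nat.log 2 (n / 2 - 1) = K := by
          apply Nat.log_eq_of_pow_le_of_lt_pow <;> omega
        rw [hloga]
        have hncast : (n : ℝ) = 2 ^ (K + 2) + 1 := by
          rw [hpow']; push_cast; ring
        rw [hcasta, hcastb, hncast, hM, hK]
        have h1 : (2 : ℝ) ^ K ≠ 0 := by positivity
        field_simp
        push_cast
        ring
      · -- generic odd case
        have h2L : 2 ^ L % 2 = 0 := by omega
        have hge : 2 ^ L + 2 ≤ n - 1 := by omega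
        have hloga : Nat.log 2 (n / 2 - 1) = M := by
          apply Nat.log_eq_of_pow_le_of_lt_pow
          · omega
          · rw [← hM]; omega
        rw [hloga, hcasta, hcastb, hM]
        have h1 : (2 : ℝ) ^ M ≠ 0 := by positivity
        field_simp
        push_cast
        ring
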